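/- Let T_q be the Taft algebra at a primitive n-th root of unity q over ℂ, generated by x, g with gx = qxg, x^n = 0, g^n = 1, and the dual Hopf algebra (T_q*)^op generated by the matrix coefficients y, h of the 2-dimensional module X_2^(0). Then the pairing satisfies ⟨y^k h^l, x^i g^j⟩ = q^{lj} (k)_q! δ_{i,k}, where (k)_q! is the q-factorial (k)_q! = (1)_q (2)_q ⋯ (k)_q with (m)_q = (1 - q^m)/(1 - q). -/

import Mathlib

open scoped TensorProduct

universe u

variable {T : Type u} [Ring T] [HopfAlgebra ℂ T]

/-- Convolution product of two linear functionals on a coalgebra: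
`(φ * ψ)(t) = φ(t') ψ(t'')` in Sweedler notation. -/
noncomputable def convMul (φ ψ : Module.Dual ℂ T) : Module.Dual ℂ T :=
  LinearMap.mul' ℂ ℂ ∘ₗ TensorProduct.map φ ψ ∘ₗ Coalgebra.comul

/-- Convolution powers of a functional (with unit the counit). -/
noncomputable def convPow (φ : Module.Dual ℂ T) : ℕ → Module.Dual ℂ T
  | 0 => Coalgebra.counit
  | m + 1 => convMul φ (convPow φ m)

/-- q-Pascal coefficients. -/
noncomputable def qc (q : ℂ) : ℕ → ℕ → ℂ
  | 0, 0 => 1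
  | 0, _+1 => 0
  | i+1, 0 => qc q i 0
  | i+1, s+1 => qc q i s + q^(s+1) * qc q i (s+1)

lemma qc_zero_right (q : ℂ) (i : ℕ) : qc q i 0 = 1 := by
  induction i with
  | zero => rfl
  | succ i ih => simpa [qc] using ih

lemma qc_gt (q : ℂ) : ∀ i s, i < s → qc q i s = 0 := by
  intro i
  induction i with
  | zero =>
    intro s h
    cases s with
    | zero => omega
    | succ s => rfl
  | succ i ih =>
    intro s h
    cases s with
    | zero => omega
    | succ s =>
      have h1 : i < s := by omega
      simp [qc, ih s h1, ih (s+1) (by omega)]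

lemma qc_diag (q : ℂ) (i : ℕ) : qc q i i = 1 := by
  induction i with
  | zero => rfl
  | succ i ih => simp [qc, ih, qc_gt q i (i+1) (by omega)]

lemma qc_subdiag (q : ℂ) (i : ℕ) : qc q (i+1) i = ∑ t ∈ Finset.range (i+1), q^t := by
  induction i with
  | zero => simp [qc]
  | succ i ih =>
    have : qc q (i+1+1) (i+1) = qc q (i+1) i + q^(i+1) * qc q (i+1) (i+1) := rfl
    rw [this, qc_diag, mul_one, ih]
    exact (Finset.sum_range_succ (fun t => q^t) (i+1)).symm

lemma qpow_commute {R : Type*} [Ring R] [Algebra ℂ R] {q : ℂ} {a b : R}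
    (hba : b * a = q • (a * b)) (s : ℕ) : b * a ^ s = q ^ s • (a ^ s * b) := by
  induction s with
  | zero => simp
  | succ s ih =>
    rw [pow_succ, ← mul_assoc, ih, smul_mul_assoc, mul_assoc, hba, mul_smul_comm, smul_smul,
      ← pow_succ, ← mul_assoc, ← pow_succ]

lemma qpow_expand {R : Type*} [Ring R] [Algebra ℂ R] (q : ℂ) (a b : R)
    (hba : b * a = q • (a * b)) (i : ℕ) :
    (a + b) ^ i = ∑ s ∈ Finset.range (i+1), qc q i s • (a ^ s * b ^ (i - s)) := by
  induction i with
  | zero => simp [qc]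
  | succ i ih =>
    rw [pow_succ', ih, Finset.mul_sum]
    have expand : ∀ s ∈ Finset.range (i+1),
        (a + b) * (qc q i s • (a ^ s * b ^ (i - s)))
        = qc q i s • (a ^ (s+1) * b ^ (i - s))
          + (q ^ s * qc q i s) • (a ^ s * b ^ (i + 1 - s)) := by
      intro s hs
      have hs' : s ≤ i := Nat.lt_succ_iff.mp (Finset.mem_range.mp hs)
      rw [add_mul]
      congr 1
      · rw [mul_smul_comm, ← mul_assoc, ← pow_succ']
      · rw [mul_smul_comm, ← mul_assoc, qpow_commute hba, smul_mul_assoc, smul_smul,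
          mul_assoc, ← pow_succ', mul_comm (qc q i s) (q ^ s),
          show i - s + 1 = i + 1 - s from by omega]
    rw [Finset.sum_congr rfl expand, Finset.sum_add_distrib]
    rw [Finset.sum_range_succ' (fun s => qc q (i+1) s • (a ^ s * b ^ (i + 1 - s))) (i+1)]
    have h1 : ∀ s ∈ Finset.range (i+1),
        qc q (i+1) (s+1) • (a ^ (s+1) * b ^ (i + 1 - (s+1)))
        = qc q i s • (a ^ (s+1) * b ^ (i - s))
          + (q^(s+1) * qc q i (s+1)) • (a^(s+1) * b^(i-s)) := by
      intro s hs
      rw [show i + 1 - (s+1) = i - s from by omega,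
        show qc q (i+1) (s+1) = qc q i s + q^(s+1) * qc q i (s+1) from rfl, add_smul]
    rw [Finset.sum_congr rfl h1, Finset.sum_add_distrib]
    have h2 : ∑ s ∈ Finset.range (i+1), (q^s * qc q i s) • (a ^ s * b ^ (i + 1 - s))
        = ∑ s ∈ Finset.range (i+1), (q^(s+1) * qc q i (s+1)) • (a^(s+1) * b^(i-s))
          + qc q (i+1) 0 • (a ^ 0 * b ^ (i + 1 - 0)) := by
      rw [Finset.sum_range_succ' (fun s => (q^s * qc q i s) • (a ^ s * b ^ (i + 1 - s))) i]
      congr 1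
      · rw [Finset.sum_range_succ (fun s => (q^(s+1) * qc q i (s+1)) • (a^(s+1) * b^(i-s))) i,
          qc_gt q i (i+1) (by omega)]
        simp only [mul_zero, zero_smul, add_zero]
        exact Finset.sum_congr rfl fun s hs => by
          rw [show i + 1 - (s+1) = i - s from by omega]
      · rw [pow_zero, one_mul]
        rfl
    rw [h2]
    abel

/-- Let `T_q` be the Taft algebra at a primitive `n`-th root of unity `q`: the Hopf algebra
generated by `x, g` with `g x = q x g`, `x^n = 0`, `g^n = 1`, `Δx = 1 ⊗ x + x ⊗ g`,
`Δg = g ⊗ g`, and let `y, h ∈ T_q*` be the matrix coefficients of the two-dimensional module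
`X₂⁽⁰⁾` (so `y(x^i g^j) = δ_{i,1}` and `h(x^i g^j) = δ_{i,0} q^j`).  Then the pairing of the
monomial `y^k h^l` of `(T_q*)^op` (whose product is the opposite convolution product) with the
monomial `x^i g^j` of `T_q` is `⟨y^k h^l, x^i g^j⟩ = q^{l j} (k)_q! δ_{i,k}`, where
`(k)_q! = (1)_q (2)_q ⋯ (k)_q` with `(m)_q = (1 - q^m)/(1 - q)`. -/
theorem taft_pairing
    {n : ℕ} (hn : 2 ≤ n) {q : ℂ} (hq : IsPrimitiveRoot q n)
    (x g : T)
    (hgx : g * x = q • (x * g)) (hxn : x ^ n = 0) (hgn : g ^ n = 1)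
    (hcx : Coalgebra.comul (R := ℂ) x = 1 ⊗ₜ[ℂ] x + x ⊗ₜ[ℂ] g)
    (hcg : Coalgebra.comul (R := ℂ) g = g ⊗ₜ[ℂ] g)
    (hex : Coalgebra.counit (R := ℂ) x = 0) (heg : Coalgebra.counit (R := ℂ) g = 1)
    (hSx : HopfAlgebra.antipode (R := ℂ) x = -(x * g ^ (n - 1)))
    (hSg : HopfAlgebra.antipode (R := ℂ) g = g ^ (n - 1))
    (b : Module.Basis (Fin n × Fin n) ℂ T)
    (hb : ∀ p : Fin n × Fin n, b p = x ^ (p.1 : ℕ) * g ^ (p.2 : ℕ))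
    (y h : Module.Dual ℂ T)
    (hy : ∀ i j : ℕ, i < n → j < n → y (x ^ i * g ^ j) = if i = 1 then 1 else 0)
    (hh : ∀ i j : ℕ, i < n → j < n → h (x ^ i * g ^ j) = if i = 0 then q ^ j else 0)
    (K l i j : ℕ) (hK : K < n) (hl : l < n) (hi : i < n) (hj : j < n) :
    convMul (convPow h l) (convPow y K) (x ^ i * g ^ j) =
      q ^ (l * j) * (∏ m ∈ Finset.range K, ((1 - q ^ (m + 1)) / (1 - q))) *
        (if i = K then 1 else 0) := by
  have hn0 : 0 < n := by omega
  have hqn : q ^ n = 1 := hq.pow_eq_one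
  have hq1 : q ≠ 1 := by
    intro hq1
    have : n ∣ 1 := hq.dvd_of_pow_eq_one 1 (by simp [hq1])
    have := Nat.le_of_dvd one_pos this
    omega
  -- reduce exponents of g mod n
  have gpow : ∀ c : ℕ, g ^ c = g ^ (c % n) := by
    intro c
    conv_lhs => rw [← Nat.div_add_mod c n]
    rw [pow_add, pow_mul, hgn, one_pow, one_mul]
  have qpow : ∀ c : ℕ, q ^ c = q ^ (c % n) := by
    intro c
    conv_lhs => rw [← Nat.div_add_mod c n]
    rw [pow_add, pow_mul, hqn, one_pow, one_mul]
  have hy' : ∀ a c : ℕ, a < n → y (x ^ a * g ^ c) = if a = 1 then 1 else 0 := by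
    intro a c ha
    rw [gpow c, hy a (c % n) ha (Nat.mod_lt _ hn0)]
  have hh' : ∀ a c : ℕ, a < n → h (x ^ a * g ^ c) = if a = 0 then q ^ c else 0 := by
    intro a c ha
    rw [gpow c, hh a (c % n) ha (Nat.mod_lt _ hn0), ← qpow c]
  -- comultiplication of monomials
  have hcomul : ∀ a c : ℕ, Coalgebra.comul (R := ℂ) (x ^ a * g ^ c)
      = ∑ s ∈ Finset.range (a+1),
          qc q a s • ((x ^ (a - s) * g ^ c) ⊗ₜ[ℂ] (x ^ s * g ^ (a - s + c))) := by
    intro a c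
    have hba : (x ⊗ₜ[ℂ] g) * ((1:T) ⊗ₜ[ℂ] x) = q • (((1:T) ⊗ₜ[ℂ] x) * (x ⊗ₜ[ℂ] g)) := by
      rw [Algebra.TensorProduct.tmul_mul_tmul, Algebra.TensorProduct.tmul_mul_tmul,
        mul_one, one_mul, hgx, TensorProduct.tmul_smul]
    calc Coalgebra.comul (R := ℂ) (x ^ a * g ^ c)
        = (Bialgebra.comulAlgHom ℂ T) (x ^ a * g ^ c) := rfl
      _ = ((1:T) ⊗ₜ[ℂ] x + x ⊗ₜ[ℂ] g) ^ a * (g ⊗ₜ[ℂ] g) ^ c := by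
          rw [map_mul, map_pow, map_pow, Bialgebra.comulAlgHom_apply,
            Bialgebra.comulAlgHom_apply, hcx, hcg]
      _ = ∑ s ∈ Finset.range (a+1),
            qc q a s • ((x ^ (a - s) * g ^ c) ⊗ₜ[ℂ] (x ^ s * g ^ (a - s + c))) := by
          rw [qpow_expand q _ _ hba a, Finset.sum_mul]
          refine Finset.sum_congr rfl fun s hs => ?_
          rw [smul_mul_assoc]
          congr 1
          rw [Algebra.TensorProduct.tmul_pow, Algebra.TensorProduct.tmul_pow,
            Algebra.TensorProduct.tmul_pow, one_pow, Algebra.TensorProduct.tmul_mul_tmul,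
            Algebra.TensorProduct.tmul_mul_tmul, one_mul, mul_assoc, ← pow_add]
  -- evaluation of a convolution product on monomials
  have heval : ∀ (φ ψ : Module.Dual ℂ T) (a c : ℕ),
      convMul φ ψ (x ^ a * g ^ c)
      = ∑ s ∈ Finset.range (a+1),
          qc q a s * (φ (x ^ (a - s) * g ^ c) * ψ (x ^ s * g ^ (a - s + c))) := by
    intro φ ψ a c
    simp only [convMul, LinearMap.coe_comp, Function.comp_apply, hcomul a c, map_sum,
      map_smul, TensorProduct.map_tmul, LinearMap.mul'_apply, smul_eq_mul]
  -- counit on monomials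
  have hcounit : ∀ a c : ℕ, Coalgebra.counit (R := ℂ) (x ^ a * g ^ c)
      = if a = 0 then 1 else 0 := by
    intro a c
    calc Coalgebra.counit (R := ℂ) (x ^ a * g ^ c)
        = (Bialgebra.counitAlgHom ℂ T) (x ^ a * g ^ c) := rfl
      _ = (Coalgebra.counit (R := ℂ) x) ^ a * (Coalgebra.counit (R := ℂ) g) ^ c := by
          rw [map_mul, map_pow, map_pow, Bialgebra.counitAlgHom_apply,
            Bialgebra.counitAlgHom_apply]
      _ = if a = 0 then 1 else 0 := by
          rw [hex, heg, one_pow, mul_one, zero_pow_eq]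
  -- convolution powers of h
  have L2 : ∀ l' a c : ℕ, a < n →
      convPow h l' (x ^ a * g ^ c) = if a = 0 then q ^ (l' * c) else 0 := by
    intro l'
    induction l' with
    | zero => intro a c ha; rw [show convPow h 0 = Coalgebra.counit from rfl, hcounit]
              simp
    | succ l' ih =>
      intro a c ha
      rw [show convPow h (l'+1) = convMul h (convPow h l') from rfl, heval]
      rw [Finset.sum_eq_single_of_mem a (Finset.self_mem_range_succ a)]
      · rw [Nat.sub_self, qc_diag, one_mul, hh' 0 c (by omega), if_pos rfl, zero_add,
          ih a c ha]
        by_cases h0 : a = 0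
        · rw [if_pos h0, if_pos h0, ← pow_add]
          congr 1
          ring
        · rw [if_neg h0, if_neg h0, mul_zero]
      · intro s hs hne
        rw [hh' (a - s) c (by omega)]
        rw [if_neg (by simp only [Finset.mem_range] at hs; omega), zero_mul, mul_zero]
  -- convolution powers of y
  have L3 : ∀ k' a c : ℕ, a < n →
      convPow y k' (x ^ a * g ^ c)
      = if a = k' then ∏ m ∈ Finset.range k', ((1 - q ^ (m + 1)) / (1 - q)) else 0 := by
    intro k'
    induction k' with
    | zero => intro a c ha; rw [show convPow y 0 = Coalgebra.counit from rfl, hcounit]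
              simp
    | succ k' ih =>
      intro a c ha
      rw [show convPow y (k'+1) = convMul y (convPow y k') from rfl, heval]
      cases a with
      | zero =>
        rw [if_neg (by omega)]
        refine Finset.sum_eq_zero fun s hs => ?_
        rw [hy' (0 - s) c (by omega), if_neg (by omega), zero_mul, mul_zero]
      | succ a' =>
        rw [Finset.sum_eq_single_of_mem a' (by simp [Finset.mem_range])]
        · rw [show a' + 1 - a' = 1 from by omega, hy' 1 c (by omega), if_pos rfl, one_mul,
            ih a' (1 + c) (by omega), qc_subdiag]
          by_cases h0 : a' = k'
          · rw [if_pos h0, if_pos (by omega), Finset.prod_range_succ, h0]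
            rw [geom_sum_eq hq1, ← neg_sub (1:ℂ) (q^(k'+1)), ← neg_sub (1:ℂ) q, neg_div_neg_eq]
            ring
          · rw [if_neg h0, if_neg (by omega), mul_zero]
        · intro s hs hne
          simp only [Finset.mem_range] at hs
          rw [hy' (a' + 1 - s) c (by omega), if_neg (by omega), zero_mul, mul_zero]
  -- conclude
  rw [heval, Finset.sum_eq_single_of_mem i (Finset.self_mem_range_succ i)]
  · rw [Nat.sub_self, qc_diag, one_mul, L2 l 0 j (by omega), if_pos rfl, zero_add,
      L3 K i j hi]
    by_cases h0 : i = K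
    · rw [if_pos h0, if_pos h0]
      ring
    · rw [if_neg h0, if_neg h0]
      ring
  · intro s hs hne
    simp only [Finset.mem_range] at hs
    rw [L2 l (i - s) j (by omega), if_neg (by omega), zero_mul, mul_zero]
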